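/- In the category Graph of directed multigraphs, for every plain rule p : L ⟵l I ⟶r R and every AC ac_R over R, there exists an AC Left(p, ac_R) over L such that for every AC-disregarding direct transformation G ⇒_(p,m,m*) H with match m and comatch m*: m ⊨ Left(p, ac_R) if and only if m* ⊨ ac_R. -/

import Mathlib

open CategoryTheory CategoryTheory.Limits

universe v u

variable {C : Type u} [Category.{v} C]

/-- A plain rule: a span `L ⟵l I ⟶r R` with `l` and `r` monomorphisms. -/
structure PlainRule (C : Type u) [Category.{v} C] : Type (max u v) where
  L : C
  I : C
  R : C
  l : I ⟶ L
  r : I ⟶ R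
  mono_l : Mono l
  mono_r : Mono r

/-- An AC-disregarding direct transformation `G ⇒_(p,m) H`: a double pushout with
context `D`, match `m` and comatch `cm`. -/
structure Trafo (p : PlainRule C) (G H : C) : Type (max u v) where
  m : p.L ⟶ G
  D : C
  f : p.I ⟶ D
  k : D ⟶ G
  c : D ⟶ H
  cm : p.R ⟶ H
  po1 : IsPushout p.l f m k
  po2 : IsPushout p.r f cm c

/-- A pair of AC-disregarding transformations `H₁ ⇐_(p₁,m₁) G ⇒_(p₂,m₂) H₂`. -/
structure TrafoPair (p₁ p₂ : PlainRule C) : Type (max u v) where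
  H₁ : C
  G : C
  H₂ : C
  t₁ : Trafo p₁ G H₁
  t₂ : Trafo p₂ G H₂

/-- An extension diagram embedding `t'` into `t` via extension morphism `ext`. -/
structure TrafoEmbedding {p : PlainRule C} {G' H' G H : C}
    (t' : Trafo p G' H') (t : Trafo p G H) (ext : G' ⟶ G) : Type (max u v) where
  d : t'.D ⟶ t.D
  h : H' ⟶ H
  match_eq : t'.m ≫ ext = t.m
  f_eq : t'.f ≫ d = t.f
  po1 : IsPushout t'.k d ext t.k
  po2 : IsPushout t'.c d h t.c

/-- A transformation pair embedded into another via a common extension morphism. -/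
structure PairEmbedding {p₁ p₂ : PlainRule C} (tp' tp : TrafoPair p₁ p₂)
    (ext : tp'.G ⟶ tp.G) : Type (max u v) where
  e₁ : TrafoEmbedding tp'.t₁ tp.t₁ ext
  e₂ : TrafoEmbedding tp'.t₂ tp.t₂ ext

/-- Parallel independence of a plain transformation pair. -/
def TrafoPair.ParallelIndep {p₁ p₂ : PlainRule C} (tp : TrafoPair p₁ p₂) : Prop :=
  (∃ d₁₂ : p₁.L ⟶ tp.t₂.D, d₁₂ ≫ tp.t₂.k = tp.t₁.m) ∧
  (∃ d₂₁ : p₂.L ⟶ tp.t₁.D, d₂₁ ≫ tp.t₁.k = tp.t₂.m)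

/-- Use-delete conflict: no commuting morphism `d₁₂ : L₁ ⟶ D₂` exists. -/
def TrafoPair.UseDelete {p₁ p₂ : PlainRule C} (tp : TrafoPair p₁ p₂) : Prop :=
  ¬ ∃ d₁₂ : p₁.L ⟶ tp.t₂.D, d₁₂ ≫ tp.t₂.k = tp.t₁.m

/-- Delete-use conflict: no commuting morphism `d₂₁ : L₂ ⟶ D₁` exists. -/
def TrafoPair.DeleteUse {p₁ p₂ : PlainRule C} (tp : TrafoPair p₁ p₂) : Prop :=
  ¬ ∃ d₂₁ : p₂.L ⟶ tp.t₁.D, d₂₁ ≫ tp.t₁.k = tp.t₂.m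

/-- A transformation pair is in conflict (parallel dependent) if it is not
parallel independent. -/
def TrafoPair.InConflict {p₁ p₂ : PlainRule C} (tp : TrafoPair p₁ p₂) : Prop :=
  ¬ tp.ParallelIndep

/-- `tpI` is an initial transformation pair for `tp`. -/
def IsInitialTrafoPairFor {p₁ p₂ : PlainRule C} (tpI tp : TrafoPair p₁ p₂) : Prop :=
  ∃ fI : tpI.G ⟶ tp.G, Nonempty (PairEmbedding tpI tp fI) ∧
    ∀ (tp' : TrafoPair p₁ p₂) (f : tp'.G ⟶ tp.G), PairEmbedding tp' tp f →
      ∃! g : tpI.G ⟶ tp'.G, Nonempty (PairEmbedding tpI tp' g) ∧ g ≫ f = fI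

/-- Two transformation pairs are isomorphic if each is embedded into the other via
an isomorphism as extension morphism. -/
def PairIso {p₁ p₂ : PlainRule C} (tp tp' : TrafoPair p₁ p₂) : Prop :=
  (∃ e : tp.G ⟶ tp'.G, IsIso e ∧ Nonempty (PairEmbedding tp tp' e)) ∧
  (∃ e' : tp'.G ⟶ tp.G, IsIso e' ∧ Nonempty (PairEmbedding tp' tp e'))

section Coproducts

variable [HasBinaryCoproducts C]

lemma isPushout_coprod_left {A B X : C} (g : A ⟶ B) :
    IsPushout g (coprod.inl : A ⟶ A ⨿ X) (coprod.inl : B ⟶ B ⨿ X)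
      (coprod.map g (𝟙 X)) := by
  have w : CommSq g (coprod.inl : A ⟶ A ⨿ X) (coprod.inl : B ⟶ B ⨿ X)
      (coprod.map g (𝟙 X)) := ⟨by simp⟩
  refine IsPushout.of_isColimit' w ?_
  exact PushoutCocone.IsColimit.mk w.w
    (fun s => coprod.desc s.inl (coprod.inr ≫ s.inr))
    (fun s => coprod.inl_desc _ _)
    (fun s => by
      apply coprod.hom_ext
      · rw [coprod.inl_map_assoc, coprod.inl_desc]; exact s.condition
      · rw [coprod.inr_map_assoc, coprod.inr_desc, Category.id_comp])
    (fun s mm h1 h2 => by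
      apply coprod.hom_ext
      · rw [coprod.inl_desc]; exact h1
      · have := coprod.inr ≫= h2
        rw [coprod.inr_desc]
        rw [coprod.inr_map_assoc, Category.id_comp] at this
        exact this)

lemma isPushout_coprod_right {A B X : C} (g : A ⟶ B) :
    IsPushout g (coprod.inr : A ⟶ X ⨿ A) (coprod.inr : B ⟶ X ⨿ B)
      (coprod.map (𝟙 X) g) := by
  have w : CommSq g (coprod.inr : A ⟶ X ⨿ A) (coprod.inr : B ⟶ X ⨿ B)
      (coprod.map (𝟙 X) g) := ⟨by simp⟩
  refine IsPushout.of_isColimit' w ?_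
  exact PushoutCocone.IsColimit.mk w.w
    (fun s => coprod.desc (coprod.inl ≫ s.inr) s.inl)
    (fun s => coprod.inr_desc _ _)
    (fun s => by
      apply coprod.hom_ext
      · rw [coprod.inl_map_assoc, coprod.inl_desc, Category.id_comp]
      · rw [coprod.inr_map_assoc, coprod.inr_desc]; exact s.condition)
    (fun s mm h1 h2 => by
      apply coprod.hom_ext
      · have := coprod.inl ≫= h2
        rw [coprod.inl_desc]
        rw [coprod.inl_map_assoc, Category.id_comp] at this
        exact this
      · rw [coprod.inr_desc]; exact h1)

/-- The transformation applying `p` at the coproduct injection `inl : L ⟶ L ⨿ X`. -/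
noncomputable def coprodTrafoL (p : PlainRule C) (X : C) : Trafo p (p.L ⨿ X) (p.R ⨿ X) where
  m := coprod.inl
  D := p.I ⨿ X
  f := coprod.inl
  k := coprod.map p.l (𝟙 X)
  c := coprod.map p.r (𝟙 X)
  cm := coprod.inl
  po1 := isPushout_coprod_left p.l
  po2 := isPushout_coprod_left p.r

/-- The transformation applying `p` at the coproduct injection `inr : L ⟶ X ⨿ L`. -/
noncomputable def coprodTrafoR (p : PlainRule C) (X : C) : Trafo p (X ⨿ p.L) (X ⨿ p.R) where
  m := coprod.inr
  D := X ⨿ p.I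
  f := coprod.inr
  k := coprod.map (𝟙 X) p.l
  c := coprod.map (𝟙 X) p.r
  cm := coprod.inr
  po1 := isPushout_coprod_right p.l
  po2 := isPushout_coprod_right p.r

/-- The transformation pair `tp_(L₁+L₂) : R₁+L₂ ⇐_(p₁,i₁) L₁+L₂ ⇒_(p₂,i₂) L₁+R₂`. -/
noncomputable def coprodPair (p₁ p₂ : PlainRule C) : TrafoPair p₁ p₂ where
  H₁ := p₁.R ⨿ p₂.L
  G := p₁.L ⨿ p₂.L
  H₂ := p₁.L ⨿ p₂.R
  t₁ := coprodTrafoL p₁ p₂.L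
  t₂ := coprodTrafoR p₂ p₁.L

end Coproducts

/-! ## The category `MGraph` of directed multigraphs -/

/-- A directed multigraph: vertices, edges, and source/target maps. -/
structure MGraph : Type 1 where
  V : Type
  E : Type
  s : E → V
  t : E → V

/-- A morphism of directed multigraphs. -/
@[ext]
structure MGraphHom (G H : MGraph) where
  onV : G.V → H.V
  onE : G.E → H.E
  comm_s : ∀ e, H.s (onE e) = onV (G.s e)
  comm_t : ∀ e, H.t (onE e) = onV (G.t e)

instance : Category MGraph where
  Hom := MGraphHom
  id G := ⟨fun v => v, fun e => e, fun _ => rfl, fun _ => rfl⟩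
  comp f g := ⟨fun v => g.onV (f.onV v), fun e => g.onE (f.onE e),
    fun e => by rw [g.comm_s, f.comm_s], fun e => by rw [g.comm_t, f.comm_t]⟩

lemma MGraph.hom_ext' {G H : MGraph} {f g : G ⟶ H}
    (h1 : MGraphHom.onV f = MGraphHom.onV g) (h2 : MGraphHom.onE f = MGraphHom.onE g) :
    f = g := MGraphHom.ext h1 h2

/-- A multigraph is finite if its vertex and edge types are finite. -/
def MGraph.Fin (G : MGraph) : Prop := Finite G.V ∧ Finite G.E

/-- The class `M` of injective multigraph morphisms. -/
def InjHom {G H : MGraph} (f : G ⟶ H) : Prop :=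
  Function.Injective (MGraphHom.onV f) ∧ Function.Injective (MGraphHom.onE f)

/-- A pair of morphisms with common codomain is jointly surjective. -/
def JointlySurj {A B K : MGraph} (f : A ⟶ K) (g : B ⟶ K) : Prop :=
  (∀ v : K.V, (∃ a, MGraphHom.onV f a = v) ∨ (∃ b, MGraphHom.onV g b = v)) ∧
  (∀ e : K.E, (∃ a, MGraphHom.onE f a = e) ∨ (∃ b, MGraphHom.onE g b = e))

/-! ### Binary coproducts of multigraphs -/

/-- Disjoint union of multigraphs. -/
def MGraph.sum (G H : MGraph) : MGraph where
  V := G.V ⊕ H.V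
  E := G.E ⊕ H.E
  s := Sum.elim (fun e => Sum.inl (G.s e)) (fun e => Sum.inr (H.s e))
  t := Sum.elim (fun e => Sum.inl (G.t e)) (fun e => Sum.inr (H.t e))

def MGraph.inl' (G H : MGraph) : G ⟶ G.sum H :=
  ⟨Sum.inl, Sum.inl, fun _ => rfl, fun _ => rfl⟩

def MGraph.inr' (G H : MGraph) : H ⟶ G.sum H :=
  ⟨Sum.inr, Sum.inr, fun _ => rfl, fun _ => rfl⟩

def MGraph.desc' {G H K : MGraph} (f : G ⟶ K) (g : H ⟶ K) : G.sum H ⟶ K where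
  onV := Sum.elim (MGraphHom.onV f) (MGraphHom.onV g)
  onE := Sum.elim (MGraphHom.onE f) (MGraphHom.onE g)
  comm_s := by rintro (e | e) <;> simp [MGraph.sum, MGraphHom.comm_s]
  comm_t := by rintro (e | e) <;> simp [MGraph.sum, MGraphHom.comm_t]

lemma MGraph.inl'_desc' {G H K : MGraph} (f : G ⟶ K) (g : H ⟶ K) :
    MGraph.inl' G H ≫ MGraph.desc' f g = f := by
  apply MGraph.hom_ext' <;> rfl

lemma MGraph.inr'_desc' {G H K : MGraph} (f : G ⟶ K) (g : H ⟶ K) :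
    MGraph.inr' G H ≫ MGraph.desc' f g = g := by
  apply MGraph.hom_ext' <;> rfl

lemma MGraph.sum_hom_ext {G H K : MGraph} {f g : G.sum H ⟶ K}
    (h1 : MGraph.inl' G H ≫ f = MGraph.inl' G H ≫ g)
    (h2 : MGraph.inr' G H ≫ f = MGraph.inr' G H ≫ g) : f = g := by
  apply MGraph.hom_ext'
  · funext v
    rcases v with v | v
    · exact congrFun (congrArg MGraphHom.onV h1) v
    · exact congrFun (congrArg MGraphHom.onV h2) v
  · funext e
    rcases e with e | e
    · exact congrFun (congrArg MGraphHom.onE h1) e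
    · exact congrFun (congrArg MGraphHom.onE h2) e

def MGraph.sumCofanIsColimit (G H : MGraph) :
    IsColimit (BinaryCofan.mk (MGraph.inl' G H) (MGraph.inr' G H)) :=
  BinaryCofan.isColimitMk
    (fun s => MGraph.desc' s.inl s.inr)
    (fun s => MGraph.inl'_desc' _ _)
    (fun s => MGraph.inr'_desc' _ _)
    (fun s mm h1 h2 => by
      apply MGraph.sum_hom_ext
      · rw [h1]; exact (MGraph.inl'_desc' _ _).symm
      · rw [h2]; exact (MGraph.inr'_desc' _ _).symm)

instance (G H : MGraph) : HasColimit (pair G H) :=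
  HasColimit.mk ⟨_, MGraph.sumCofanIsColimit G H⟩

instance : HasBinaryCoproducts MGraph := hasBinaryCoproducts_of_hasColimit_pair MGraph

/-! ### Nested application conditions -/

/-- Nested application conditions over a multigraph. -/
inductive AC : MGraph → Type 1 where
  | tru : (P : MGraph) → AC P
  | ex : {P Q : MGraph} → (P ⟶ Q) → AC Q → AC P
  | neg : {P : MGraph} → AC P → AC P
  | conj : {P : MGraph} → AC P → AC P → AC P

/-- Satisfaction of an application condition by a morphism, where the extension
morphism `q` is required to be in the class `M` of injective morphisms. -/
def AC.Sat : {P G : MGraph} → (P ⟶ G) → AC P → Prop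
  | _, _, _, AC.tru _ => True
  | _, G, p, AC.ex a c => ∃ q : _ ⟶ G, InjHom q ∧ a ≫ q = p ∧ AC.Sat q c
  | _, _, p, AC.neg c => ¬ AC.Sat p c
  | _, _, p, AC.conj c₁ c₂ => AC.Sat p c₁ ∧ AC.Sat p c₂

/-- All constituent graphs of an application condition are finite. -/
def AC.FinGraphs : {P : MGraph} → AC P → Prop
  | _, AC.tru _ => True
  | _, AC.ex (Q := Q) _ c => Q.Fin ∧ AC.FinGraphs c
  | _, AC.neg c => AC.FinGraphs c
  | _, AC.conj c₁ c₂ => AC.FinGraphs c₁ ∧ AC.FinGraphs c₂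

/-- Equivalence of ACs: exactly the same morphisms satisfy them. -/
def AC.Equiv {P : MGraph} (c c' : AC P) : Prop :=
  ∀ {G : MGraph} (p : P ⟶ G), AC.Sat p c ↔ AC.Sat p c'

/-- A rule with application condition. -/
structure Rule : Type 1 where
  p : PlainRule MGraph
  ac : AC p.L

/-- A rule is finite if its rule graphs and the constituent graphs of its AC are. -/
def RuleFin (ρ : Rule) : Prop :=
  ρ.p.L.Fin ∧ ρ.p.I.Fin ∧ ρ.p.R.Fin ∧ AC.FinGraphs ρ.ac

/-- A transformation pair via rules with ACs: the matches satisfy the rule ACs. -/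
structure RTrafoPair (ρ₁ ρ₂ : Rule) : Type 1 where
  tp : TrafoPair ρ₁.p ρ₂.p
  sat₁ : AC.Sat tp.t₁.m ρ₁.ac
  sat₂ : AC.Sat tp.t₂.m ρ₂.ac

/-- Parallel independence for transformations via rules with ACs. -/
def RParallelIndep (ρ₁ ρ₂ : Rule) (tp : TrafoPair ρ₁.p ρ₂.p) : Prop :=
  (∃ d₁₂ : ρ₁.p.L ⟶ tp.t₂.D, d₁₂ ≫ tp.t₂.k = tp.t₁.m ∧
      AC.Sat (d₁₂ ≫ tp.t₂.c) ρ₁.ac) ∧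
  (∃ d₂₁ : ρ₂.p.L ⟶ tp.t₁.D, d₂₁ ≫ tp.t₁.k = tp.t₂.m ∧
      AC.Sat (d₂₁ ≫ tp.t₁.c) ρ₂.ac)


/-! ### Auxiliary development for the shift-over-rules theorem -/

namespace ShiftAux

open Classical MGraphHom

lemma elemV {A B : MGraph} {f g : A ⟶ B} (h : f = g) (v : A.V) :
    onV f v = onV g v := by rw [h]

lemma elemE {A B : MGraph} {f g : A ⟶ B} (h : f = g) (e : A.E) :
    onE f e = onE g e := by rw [h]

/-! #### Monomorphisms in `MGraph` are injective -/

def vGraph : MGraph := ⟨PUnit, PEmpty, PEmpty.elim, PEmpty.elim⟩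

def vHom (G : MGraph) (v : G.V) : vGraph ⟶ G :=
  ⟨fun _ => v, PEmpty.elim, fun e => e.elim, fun e => e.elim⟩

def eGraph : MGraph := ⟨Bool, PUnit, fun _ => false, fun _ => true⟩

def eHom (G : MGraph) (e : G.E) : eGraph ⟶ G where
  onV := fun b => cond b (G.t e) (G.s e)
  onE := fun _ => e
  comm_s := fun _ => rfl
  comm_t := fun _ => rfl

lemma injHom_of_mono {A B : MGraph} (f : A ⟶ B) (hf : Mono f) : InjHom f := by
  haveI := hf
  constructor
  · intro v v' h
    have he : vHom A v ≫ f = vHom A v' ≫ f :=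
      MGraph.hom_ext' (funext fun _ => h) (funext fun e => e.elim)
    have := (cancel_mono f).mp he
    exact elemV this PUnit.unit
  · intro e e' h
    have hs : onV f (A.s e) = onV f (A.s e') := by
      rw [← MGraphHom.comm_s f e, ← MGraphHom.comm_s f e', h]
    have ht : onV f (A.t e) = onV f (A.t e') := by
      rw [← MGraphHom.comm_t f e, ← MGraphHom.comm_t f e', h]
    have he : eHom A e ≫ f = eHom A e' ≫ f := by
      apply MGraph.hom_ext'
      · funext b
        cases b
        · exact hs
        · exact ht
      · funext _
        exact h
    have := (cancel_mono f).mp he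
    exact elemE this PUnit.unit

/-! #### Element-level characterization of pushouts along injective morphisms -/

structure SquareFacts {Z X Y P : MGraph} (f : Z ⟶ X) (g : Z ⟶ Y)
    (p : X ⟶ P) (q : Y ⟶ P) : Prop where
  injq : InjHom q
  surjV : ∀ v : P.V, (∃ x, onV p x = v) ∨ (∃ y, onV q y = v)
  surjE : ∀ e : P.E, (∃ x, onE p x = e) ∨ (∃ y, onE q y = e)
  identV : ∀ x x', onV p x = onV p x' →
    x = x' ∨ ∃ z z', onV f z = x ∧ onV f z' = x' ∧ onV g z = onV g z'
  identE : ∀ x x', onE p x = onE p x' →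
    x = x' ∨ ∃ z z', onE f z = x ∧ onE f z' = x' ∧ onE g z = onE g z'
  mixedV : ∀ x y, onV p x = onV q y → ∃ z, onV f z = x ∧ onV g z = y
  mixedE : ∀ x y, onE p x = onE q y → ∃ z, onE f z = x ∧ onE g z = y

section Recognition

variable {Z X Y P K : MGraph} {f : Z ⟶ X} {g : Z ⟶ Y} {p : X ⟶ P} {q : Y ⟶ P}

noncomputable def descV (F : SquareFacts f g p q) (u : X ⟶ K) (w : Y ⟶ K) (v : P.V) : K.V :=
  if h : ∃ x, onV p x = v then onV u h.choose
  else onV w ((F.surjV v).resolve_left h).choose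

noncomputable def descE (F : SquareFacts f g p q) (u : X ⟶ K) (w : Y ⟶ K) (e : P.E) : K.E :=
  if h : ∃ x, onE p x = e then onE u h.choose
  else onE w ((F.surjE e).resolve_left h).choose

lemma descV_p (F : SquareFacts f g p q) (u : X ⟶ K) (w : Y ⟶ K)
    (huw : f ≫ u = g ≫ w) (x : X.V) : descV F u w (onV p x) = onV u x := by
  have h : ∃ x', onV p x' = onV p x := ⟨x, rfl⟩
  rw [descV, dif_pos h]
  rcases F.identV _ _ h.choose_spec with heq | ⟨z, z', hz, hz', hgz⟩
  · rw [heq]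
  · rw [← hz, ← hz']
    calc onV u (onV f z) = onV w (onV g z) := elemV huw z
      _ = onV w (onV g z') := by rw [hgz]
      _ = onV u (onV f z') := (elemV huw z').symm

lemma descE_p (F : SquareFacts f g p q) (u : X ⟶ K) (w : Y ⟶ K)
    (huw : f ≫ u = g ≫ w) (x : X.E) : descE F u w (onE p x) = onE u x := by
  have h : ∃ x', onE p x' = onE p x := ⟨x, rfl⟩
  rw [descE, dif_pos h]
  rcases F.identE _ _ h.choose_spec with heq | ⟨z, z', hz, hz', hgz⟩
  · rw [heq]
  · rw [← hz, ← hz']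
    calc onE u (onE f z) = onE w (onE g z) := elemE huw z
      _ = onE w (onE g z') := by rw [hgz]
      _ = onE u (onE f z') := (elemE huw z').symm

lemma descV_q (F : SquareFacts f g p q) (u : X ⟶ K) (w : Y ⟶ K)
    (huw : f ≫ u = g ≫ w) (y : Y.V) : descV F u w (onV q y) = onV w y := by
  by_cases h : ∃ x, onV p x = onV q y
  · rw [descV, dif_pos h]
    obtain ⟨z, hz, hgz⟩ := F.mixedV h.choose y h.choose_spec
    calc onV u h.choose = onV u (onV f z) := by rw [hz]
      _ = onV w (onV g z) := elemV huw z
      _ = onV w y := by rw [hgz]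
  · rw [descV, dif_neg h]
    exact congrArg (onV w) (F.injq.1 ((F.surjV (onV q y)).resolve_left h).choose_spec)

lemma descE_q (F : SquareFacts f g p q) (u : X ⟶ K) (w : Y ⟶ K)
    (huw : f ≫ u = g ≫ w) (y : Y.E) : descE F u w (onE q y) = onE w y := by
  by_cases h : ∃ x, onE p x = onE q y
  · rw [descE, dif_pos h]
    obtain ⟨z, hz, hgz⟩ := F.mixedE h.choose y h.choose_spec
    calc onE u h.choose = onE u (onE f z) := by rw [hz]
      _ = onE w (onE g z) := elemE huw z
      _ = onE w y := by rw [hgz]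
  · rw [descE, dif_neg h]
    exact congrArg (onE w) (F.injq.2 ((F.surjE (onE q y)).resolve_left h).choose_spec)

noncomputable def descHom (F : SquareFacts f g p q) (u : X ⟶ K) (w : Y ⟶ K)
    (huw : f ≫ u = g ≫ w) : P ⟶ K where
  onV := descV F u w
  onE := descE F u w
  comm_s e := by
    rcases F.surjE e with ⟨x, rfl⟩ | ⟨y, rfl⟩
    · rw [descE_p F u w huw x, MGraphHom.comm_s u x, MGraphHom.comm_s p x,
        descV_p F u w huw]
    · rw [descE_q F u w huw y, MGraphHom.comm_s w y, MGraphHom.comm_s q y,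
        descV_q F u w huw]
  comm_t e := by
    rcases F.surjE e with ⟨x, rfl⟩ | ⟨y, rfl⟩
    · rw [descE_p F u w huw x, MGraphHom.comm_t u x, MGraphHom.comm_t p x,
        descV_p F u w huw]
    · rw [descE_q F u w huw y, MGraphHom.comm_t w y, MGraphHom.comm_t q y,
        descV_q F u w huw]

lemma isPushout_of_facts (comm : f ≫ p = g ≫ q) (F : SquareFacts f g p q) :
    IsPushout f g p q := by
  have w : CommSq f g p q := ⟨comm⟩
  refine IsPushout.of_isColimit' w ?_
  exact PushoutCocone.IsColimit.mk w.w
    (fun s => descHom F s.inl s.inr s.condition)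
    (fun s => MGraph.hom_ext'
      (funext fun x => descV_p F s.inl s.inr s.condition x)
      (funext fun x => descE_p F s.inl s.inr s.condition x))
    (fun s => MGraph.hom_ext'
      (funext fun y => descV_q F s.inl s.inr s.condition y)
      (funext fun y => descE_q F s.inl s.inr s.condition y))
    (fun s mm h1 h2 => by
      apply MGraph.hom_ext'
      · funext v
        rcases F.surjV v with ⟨x, rfl⟩ | ⟨y, rfl⟩
        · calc onV mm (onV p x) = onV s.inl x := elemV h1 x
            _ = descV F s.inl s.inr (onV p x) := (descV_p F s.inl s.inr s.condition x).symm
        · calc onV mm (onV q y) = onV s.inr y := elemV h2 y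
            _ = descV F s.inl s.inr (onV q y) := (descV_q F s.inl s.inr s.condition y).symm
      · funext e
        rcases F.surjE e with ⟨x, rfl⟩ | ⟨y, rfl⟩
        · calc onE mm (onE p x) = onE s.inl x := elemE h1 x
            _ = descE F s.inl s.inr (onE p x) := (descE_p F s.inl s.inr s.condition x).symm
        · calc onE mm (onE q y) = onE s.inr y := elemE h2 y
            _ = descE F s.inl s.inr (onE q y) := (descE_q F s.inl s.inr s.condition y).symm)

end Recognition

/-! #### A concrete model of the pushout along an injective morphism -/

section Model

variable {Z X Y : MGraph} (f : Z ⟶ X) (g : Z ⟶ Y)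

noncomputable def pXV (x : X.V) : Y.V ⊕ {v : X.V // ¬ ∃ z, onV f z = v} :=
  if h : ∃ z, onV f z = x then Sum.inl (onV g h.choose) else Sum.inr ⟨x, h⟩

noncomputable def pXE (e : X.E) : Y.E ⊕ {e' : X.E // ¬ ∃ z, onE f z = e'} :=
  if h : ∃ z, onE f z = e then Sum.inl (onE g h.choose) else Sum.inr ⟨e, h⟩

noncomputable def MP : MGraph where
  V := Y.V ⊕ {v : X.V // ¬ ∃ z, onV f z = v}
  E := Y.E ⊕ {e : X.E // ¬ ∃ z, onE f z = e}
  s := Sum.elim (fun e => Sum.inl (Y.s e)) (fun e => pXV f g (X.s e.val))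
  t := Sum.elim (fun e => Sum.inl (Y.t e)) (fun e => pXV f g (X.t e.val))

lemma pXV_eq (hf : InjHom f) (z : Z.V) : pXV f g (onV f z) = Sum.inl (onV g z) := by
  have h : ∃ z', onV f z' = onV f z := ⟨z, rfl⟩
  rw [pXV, dif_pos h]
  exact congrArg Sum.inl (congrArg (onV g) (hf.1 h.choose_spec))

lemma pXE_eq (hf : InjHom f) (z : Z.E) : pXE f g (onE f z) = Sum.inl (onE g z) := by
  have h : ∃ z', onE f z' = onE f z := ⟨z, rfl⟩
  rw [pXE, dif_pos h]
  exact congrArg Sum.inl (congrArg (onE g) (hf.2 h.choose_spec))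

noncomputable def pXhom (hf : InjHom f) : X ⟶ MP f g where
  onV := pXV f g
  onE := pXE f g
  comm_s e := by
    by_cases h : ∃ z, onE f z = e
    · obtain ⟨z, rfl⟩ := h
      rw [pXE_eq f g hf z]
      show Sum.inl (Y.s (onE g z)) = pXV f g (X.s (onE f z))
      rw [MGraphHom.comm_s g z, MGraphHom.comm_s f z, pXV_eq f g hf]
    · rw [pXE, dif_neg h]
      rfl
  comm_t e := by
    by_cases h : ∃ z, onE f z = e
    · obtain ⟨z, rfl⟩ := h
      rw [pXE_eq f g hf z]
      show Sum.inl (Y.t (onE g z)) = pXV f g (X.t (onE f z))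
      rw [MGraphHom.comm_t g z, MGraphHom.comm_t f z, pXV_eq f g hf]
    · rw [pXE, dif_neg h]
      rfl

def pYhom : Y ⟶ MP f g := ⟨Sum.inl, Sum.inl, fun _ => rfl, fun _ => rfl⟩

lemma MP_comm (hf : InjHom f) : f ≫ pXhom f g hf = g ≫ pYhom f g :=
  MGraph.hom_ext' (funext fun z => pXV_eq f g hf z) (funext fun z => pXE_eq f g hf z)

lemma pYhom_inj : InjHom (pYhom f g) := ⟨Sum.inl_injective, Sum.inl_injective⟩

lemma MP_facts (hf : InjHom f) : SquareFacts f g (pXhom f g hf) (pYhom f g) := by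
  constructor
  case injq => exact pYhom_inj f g
  case surjV =>
    intro v
    rcases v with y | ⟨x, hx⟩
    · exact Or.inr ⟨y, rfl⟩
    · exact Or.inl ⟨x, by show pXV f g x = _; rw [pXV, dif_neg hx]⟩
  case surjE =>
    intro e
    rcases e with y | ⟨x, hx⟩
    · exact Or.inr ⟨y, rfl⟩
    · exact Or.inl ⟨x, by show pXE f g x = _; rw [pXE, dif_neg hx]⟩
  case identV =>
    intro x x' h
    have h' : pXV f g x = pXV f g x' := h
    by_cases h1 : ∃ z, onV f z = x <;> by_cases h2 : ∃ z, onV f z = x'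
    · rw [pXV, dif_pos h1, pXV, dif_pos h2] at h'
      exact Or.inr ⟨h1.choose, h2.choose, h1.choose_spec, h2.choose_spec, Sum.inl.inj h'⟩
    · rw [pXV, dif_pos h1, pXV, dif_neg h2] at h'
      exact absurd h' (by simp)
    · rw [pXV, dif_neg h1, pXV, dif_pos h2] at h'
      exact absurd h' (by simp)
    · rw [pXV, dif_neg h1, pXV, dif_neg h2] at h'
      exact Or.inl (congrArg Subtype.val (Sum.inr.inj h'))
  case identE =>
    intro x x' h
    have h' : pXE f g x = pXE f g x' := h
    by_cases h1 : ∃ z, onE f z = x <;> by_cases h2 : ∃ z, onE f z = x'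
    · rw [pXE, dif_pos h1, pXE, dif_pos h2] at h'
      exact Or.inr ⟨h1.choose, h2.choose, h1.choose_spec, h2.choose_spec, Sum.inl.inj h'⟩
    · rw [pXE, dif_pos h1, pXE, dif_neg h2] at h'
      exact absurd h' (by simp)
    · rw [pXE, dif_neg h1, pXE, dif_pos h2] at h'
      exact absurd h' (by simp)
    · rw [pXE, dif_neg h1, pXE, dif_neg h2] at h'
      exact Or.inl (congrArg Subtype.val (Sum.inr.inj h'))
  case mixedV =>
    intro x y h
    have h' : pXV f g x = Sum.inl y := h
    by_cases h1 : ∃ z, onV f z = x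
    · rw [pXV, dif_pos h1] at h'
      exact ⟨h1.choose, h1.choose_spec, Sum.inl.inj h'⟩
    · rw [pXV, dif_neg h1] at h'
      exact absurd h' (by simp)
  case mixedE =>
    intro x y h
    have h' : pXE f g x = Sum.inl y := h
    by_cases h1 : ∃ z, onE f z = x
    · rw [pXE, dif_pos h1] at h'
      exact ⟨h1.choose, h1.choose_spec, Sum.inl.inj h'⟩
    · rw [pXE, dif_neg h1] at h'
      exact absurd h' (by simp)

lemma MP_isPushout (hf : InjHom f) : IsPushout f g (pXhom f g hf) (pYhom f g) :=
  isPushout_of_facts (MP_comm f g hf) (MP_facts f g hf)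

end Model

/-! #### Any pushout along an injective morphism satisfies the element facts -/

lemma facts_of_isPushout {Z X Y P : MGraph} {f : Z ⟶ X} {g : Z ⟶ Y}
    {p : X ⟶ P} {q : Y ⟶ P} (hf : InjHom f) (hpo : IsPushout f g p q) :
    SquareFacts f g p q := by
  have hM := MP_isPushout f g hf
  have FM := MP_facts f g hf
  set φ : MP f g ⟶ P := hM.desc p q hpo.w with hφ
  have hφ1 : pXhom f g hf ≫ φ = p := hM.inl_desc p q hpo.w
  have hφ2 : pYhom f g ≫ φ = q := hM.inr_desc p q hpo.w
  set ψ : P ⟶ MP f g := hpo.desc (pXhom f g hf) (pYhom f g) (MP_comm f g hf) with hψ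
  have hψ1 : p ≫ ψ = pXhom f g hf := hpo.inl_desc _ _ _
  have hψ2 : q ≫ ψ = pYhom f g := hpo.inr_desc _ _ _
  have hψφ : ψ ≫ φ = 𝟙 P := by
    apply hpo.hom_ext
    · rw [← Category.assoc, hψ1, hφ1, Category.comp_id]
    · rw [← Category.assoc, hψ2, hφ2, Category.comp_id]
  have ψφV : ∀ v : P.V, onV φ (onV ψ v) = v := fun v => elemV hψφ v
  have ψφE : ∀ e : P.E, onE φ (onE ψ e) = e := fun e => elemE hψφ e
  constructor
  case injq =>
    constructor
    · intro y y' h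
      have : onV ψ (onV q y) = onV ψ (onV q y') := congrArg (onV ψ) h
      have h2 : onV (pYhom f g) y = onV (pYhom f g) y' := by
        rw [← elemV hψ2 y, ← elemV hψ2 y']
        exact this
      exact Sum.inl_injective h2
    · intro y y' h
      have : onE ψ (onE q y) = onE ψ (onE q y') := congrArg (onE ψ) h
      have h2 : onE (pYhom f g) y = onE (pYhom f g) y' := by
        rw [← elemE hψ2 y, ← elemE hψ2 y']
        exact this
      exact Sum.inl_injective h2
  case surjV =>
    intro v
    rcases FM.surjV (onV ψ v) with ⟨x, hx⟩ | ⟨y, hy⟩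
    · refine Or.inl ⟨x, ?_⟩
      calc onV p x = onV φ (onV (pXhom f g hf) x) := (elemV hφ1 x).symm
        _ = onV φ (onV ψ v) := by rw [hx]
        _ = v := ψφV v
    · refine Or.inr ⟨y, ?_⟩
      calc onV q y = onV φ (onV (pYhom f g) y) := (elemV hφ2 y).symm
        _ = onV φ (onV ψ v) := by rw [hy]
        _ = v := ψφV v
  case surjE =>
    intro e
    rcases FM.surjE (onE ψ e) with ⟨x, hx⟩ | ⟨y, hy⟩
    · refine Or.inl ⟨x, ?_⟩
      calc onE p x = onE φ (onE (pXhom f g hf) x) := (elemE hφ1 x).symm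
        _ = onE φ (onE ψ e) := by rw [hx]
        _ = e := ψφE e
    · refine Or.inr ⟨y, ?_⟩
      calc onE q y = onE φ (onE (pYhom f g) y) := (elemE hφ2 y).symm
        _ = onE φ (onE ψ e) := by rw [hy]
        _ = e := ψφE e
  case identV =>
    intro x x' h
    apply FM.identV
    calc onV (pXhom f g hf) x = onV ψ (onV p x) := (elemV hψ1 x).symm
      _ = onV ψ (onV p x') := by rw [h]
      _ = onV (pXhom f g hf) x' := elemV hψ1 x'
  case identE =>
    intro x x' h
    apply FM.identE
    calc onE (pXhom f g hf) x = onE ψ (onE p x) := (elemE hψ1 x).symm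
      _ = onE ψ (onE p x') := by rw [h]
      _ = onE (pXhom f g hf) x' := elemE hψ1 x'
  case mixedV =>
    intro x y h
    apply FM.mixedV
    calc onV (pXhom f g hf) x = onV ψ (onV p x) := (elemV hψ1 x).symm
      _ = onV ψ (onV q y) := by rw [h]
      _ = onV (pYhom f g) y := elemV hψ2 y
  case mixedE =>
    intro x y h
    apply FM.mixedE
    calc onE (pXhom f g hf) x = onE ψ (onE p x) := (elemE hψ1 x).symm
      _ = onE ψ (onE q y) := by rw [h]
      _ = onE (pYhom f g) y := elemE hψ2 y

/-! #### The gluing condition and the pushout complement -/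

section Compl

variable {I R Q : MGraph} (r : I ⟶ R) (a : R ⟶ Q)

def DelV (v : Q.V) : Prop := ¬ ∃ x, (¬ ∃ i, onV r i = x) ∧ onV a x = v

def DelE (e : Q.E) : Prop := ¬ ∃ x, (¬ ∃ i, onE r i = x) ∧ onE a x = e

def GC : Prop :=
  ((∀ x x', onV a x = onV a x' → x = x' ∨ ((∃ i, onV r i = x) ∧ ∃ i, onV r i = x')) ∧
   (∀ x x', onE a x = onE a x' → x = x' ∨ ((∃ i, onE r i = x) ∧ ∃ i, onE r i = x'))) ∧
  (∀ e : Q.E, DelE r a e → DelV r a (Q.s e) ∧ DelV r a (Q.t e))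

def Del (h : GC r a) : MGraph where
  V := {v : Q.V // DelV r a v}
  E := {e : Q.E // DelE r a e}
  s := fun e => ⟨Q.s e.val, (h.2 e.val e.property).1⟩
  t := fun e => ⟨Q.t e.val, (h.2 e.val e.property).2⟩

def kM (h : GC r a) : Del r a h ⟶ Q :=
  ⟨Subtype.val, Subtype.val, fun _ => rfl, fun _ => rfl⟩

lemma kM_inj (h : GC r a) : InjHom (kM r a h) :=
  ⟨fun _ _ hx => Subtype.ext hx, fun _ _ hx => Subtype.ext hx⟩

lemma fMemV (h : GC r a) (i : I.V) : DelV r a (onV a (onV r i)) := by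
  rintro ⟨x, hxr, hx⟩
  rcases h.1.1 x (onV r i) hx with rfl | ⟨hx1, _⟩
  · exact hxr ⟨i, rfl⟩
  · exact hxr hx1

lemma fMemE (h : GC r a) (i : I.E) : DelE r a (onE a (onE r i)) := by
  rintro ⟨x, hxr, hx⟩
  rcases h.1.2 x (onE r i) hx with rfl | ⟨hx1, _⟩
  · exact hxr ⟨i, rfl⟩
  · exact hxr hx1

def fM (h : GC r a) : I ⟶ Del r a h where
  onV i := ⟨onV a (onV r i), fMemV r a h i⟩
  onE i := ⟨onE a (onE r i), fMemE r a h i⟩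
  comm_s i := Subtype.ext (by
    show Q.s (onE a (onE r i)) = onV a (onV r (I.s i))
    rw [MGraphHom.comm_s a, MGraphHom.comm_s r])
  comm_t i := Subtype.ext (by
    show Q.t (onE a (onE r i)) = onV a (onV r (I.t i))
    rw [MGraphHom.comm_t a, MGraphHom.comm_t r])

lemma S1comm (h : GC r a) : r ≫ a = fM r a h ≫ kM r a h :=
  MGraph.hom_ext' rfl rfl

lemma S1facts (h : GC r a) : SquareFacts r (fM r a h) a (kM r a h) := by
  constructor
  case injq => exact kM_inj r a h
  case surjV =>
    intro v
    by_cases hv : DelV r a v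
    · exact Or.inr ⟨⟨v, hv⟩, rfl⟩
    · obtain ⟨x, -, hx⟩ := not_not.mp hv
      exact Or.inl ⟨x, hx⟩
  case surjE =>
    intro e
    by_cases he : DelE r a e
    · exact Or.inr ⟨⟨e, he⟩, rfl⟩
    · obtain ⟨x, -, hx⟩ := not_not.mp he
      exact Or.inl ⟨x, hx⟩
  case identV =>
    intro x x' hxx
    rcases h.1.1 x x' hxx with heq | ⟨⟨i, hi⟩, ⟨i', hi'⟩⟩
    · exact Or.inl heq
    · refine Or.inr ⟨i, i', hi, hi', Subtype.ext ?_⟩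
      show onV a (onV r i) = onV a (onV r i')
      rw [hi, hi', hxx]
  case identE =>
    intro x x' hxx
    rcases h.1.2 x x' hxx with heq | ⟨⟨i, hi⟩, ⟨i', hi'⟩⟩
    · exact Or.inl heq
    · refine Or.inr ⟨i, i', hi, hi', Subtype.ext ?_⟩
      show onE a (onE r i) = onE a (onE r i')
      rw [hi, hi', hxx]
  case mixedV =>
    intro x d hxd
    have hx : ∃ i, onV r i = x := by
      by_contra hc
      exact d.property ⟨x, hc, hxd⟩
    obtain ⟨i, rfl⟩ := hx
    exact ⟨i, rfl, Subtype.ext hxd⟩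
  case mixedE =>
    intro x d hxd
    have hx : ∃ i, onE r i = x := by
      by_contra hc
      exact d.property ⟨x, hc, hxd⟩
    obtain ⟨i, rfl⟩ := hx
    exact ⟨i, rfl, Subtype.ext hxd⟩

lemma S1po (h : GC r a) : IsPushout r (fM r a h) a (kM r a h) :=
  isPushout_of_facts (S1comm r a h) (S1facts r a h)

end Compl

/-- If the comatch of a transformation extends (injectively) to an AC context `Q`,
then the gluing condition for the inverse rule application at `a` holds. -/
lemma gc_of_extension {I R Q H D : MGraph} {r : I ⟶ R} {a : R ⟶ Q}
    {f : I ⟶ D} {cm : R ⟶ H} {cc : D ⟶ H} (po2 : IsPushout r f cm cc)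
    (hr : InjHom r) {q : Q ⟶ H} (qinj : InjHom q) (haq : a ≫ q = cm) :
    GC r a := by
  have F1 := facts_of_isPushout hr po2
  have identV : ∀ x x', onV a x = onV a x' →
      x = x' ∨ ((∃ i, onV r i = x) ∧ ∃ i, onV r i = x') := by
    intro x x' hxx
    have hc : onV cm x = onV cm x' := by
      rw [← elemV haq x, ← elemV haq x']
      exact congrArg (onV q) hxx
    rcases F1.identV x x' hc with heq | ⟨i, i', hi, hi', -⟩
    · exact Or.inl heq
    · exact Or.inr ⟨⟨i, hi⟩, ⟨i', hi'⟩⟩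
  have identE : ∀ x x', onE a x = onE a x' →
      x = x' ∨ ((∃ i, onE r i = x) ∧ ∃ i, onE r i = x') := by
    intro x x' hxx
    have hc : onE cm x = onE cm x' := by
      rw [← elemE haq x, ← elemE haq x']
      exact congrArg (onE q) hxx
    rcases F1.identE x x' hc with heq | ⟨i, i', hi, hi', -⟩
    · exact Or.inl heq
    · exact Or.inr ⟨⟨i, hi⟩, ⟨i', hi'⟩⟩
  refine ⟨⟨identV, identE⟩, ?_⟩
  intro e he
  have claim_s : ∀ v, onV a v = Q.s e → ∃ i, onV r i = v := by
    intro v hv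
    rcases F1.surjE (onE q e) with ⟨y, hy⟩ | ⟨z, hz⟩
    · have hay : onE a y = e := qinj.2 ((elemE haq y).trans hy)
      have hyr : ∃ i, onE r i = y := by
        by_contra hc
        exact he ⟨y, hc, hay⟩
      obtain ⟨i, rfl⟩ := hyr
      have : onV a v = onV a (onV r (I.s i)) := by
        rw [hv, ← hay, MGraphHom.comm_s a, MGraphHom.comm_s r]
      rcases identV v _ this with rfl | ⟨hv1, -⟩
      · exact ⟨I.s i, rfl⟩
      · exact hv1
    · have hmix : onV cm v = onV cc (D.s z) := by
        calc onV cm v = onV q (onV a v) := (elemV haq v).symm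
          _ = onV q (Q.s e) := by rw [hv]
          _ = H.s (onE q e) := (MGraphHom.comm_s q e).symm
          _ = H.s (onE cc z) := by rw [hz]
          _ = onV cc (D.s z) := MGraphHom.comm_s cc z
      obtain ⟨i, hri, -⟩ := F1.mixedV v (D.s z) hmix
      exact ⟨i, hri⟩
  have claim_t : ∀ v, onV a v = Q.t e → ∃ i, onV r i = v := by
    intro v hv
    rcases F1.surjE (onE q e) with ⟨y, hy⟩ | ⟨z, hz⟩
    · have hay : onE a y = e := qinj.2 ((elemE haq y).trans hy)
      have hyr : ∃ i, onE r i = y := by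
        by_contra hc
        exact he ⟨y, hc, hay⟩
      obtain ⟨i, rfl⟩ := hyr
      have : onV a v = onV a (onV r (I.t i)) := by
        rw [hv, ← hay, MGraphHom.comm_t a, MGraphHom.comm_t r]
      rcases identV v _ this with rfl | ⟨hv1, -⟩
      · exact ⟨I.t i, rfl⟩
      · exact hv1
    · have hmix : onV cm v = onV cc (D.t z) := by
        calc onV cm v = onV q (onV a v) := (elemV haq v).symm
          _ = onV q (Q.t e) := by rw [hv]
          _ = H.t (onE q e) := (MGraphHom.comm_t q e).symm
          _ = H.t (onE cc z) := by rw [hz]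
          _ = onV cc (D.t z) := MGraphHom.comm_t cc z
      obtain ⟨i, hri, -⟩ := F1.mixedV v (D.t z) hmix
      exact ⟨i, hri⟩
  constructor
  · rintro ⟨v, hnr, hva⟩
    exact hnr (claim_s v hva)
  · rintro ⟨v, hnr, hva⟩
    exact hnr (claim_t v hva)

/-! #### The shift construction `Left` -/

noncomputable def Left : {R : MGraph} → AC R → {I L : MGraph} →
    (l : I ⟶ L) → (r : I ⟶ R) → InjHom l → AC L
  | _, AC.tru _, _, L, _, _, _ => AC.tru L
  | _, AC.neg c, _, _, l, r, hl => AC.neg (Left c l r hl)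
  | _, AC.conj c₁ c₂, _, _, l, r, hl => AC.conj (Left c₁ l r hl) (Left c₂ l r hl)
  | _, AC.ex a c, _, _, l, r, hl =>
      if h : GC r a then
        AC.ex (pXhom l (fM r a h) hl)
          (Left c (pYhom l (fM r a h)) (kM r a h) (pYhom_inj l (fM r a h)))
      else AC.neg (AC.tru _)

theorem left_correct {R : MGraph} (ac : AC R) :
    ∀ {I L : MGraph} (l : I ⟶ L) (r : I ⟶ R) (hl : InjHom l) (hr : InjHom r)
      {G H D : MGraph} (m : L ⟶ G) (f : I ⟶ D) (k : D ⟶ G) (cc : D ⟶ H) (cm : R ⟶ H),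
      IsPushout l f m k → IsPushout r f cm cc →
      (AC.Sat m (Left ac l r hl) ↔ AC.Sat cm ac) := by
  induction ac with
  | tru P =>
    intro I L l r hl hr G H D m f k cc cm po1 po2
    simp [Left, AC.Sat]
  | neg c ih =>
    intro I L l r hl hr G H D m f k cc cm po1 po2
    simp only [Left, AC.Sat]
    exact not_congr (ih l r hl hr m f k cc cm po1 po2)
  | conj c₁ c₂ ih₁ ih₂ =>
    intro I L l r hl hr G H D m f k cc cm po1 po2
    simp only [Left, AC.Sat]
    exact and_congr (ih₁ l r hl hr m f k cc cm po1 po2) (ih₂ l r hl hr m f k cc cm po1 po2)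
  | @ex P Qc a c ih =>
    intro I L l r hl hr G H D m f k cc cm po1 po2
    simp only [Left]
    by_cases h : GC r a
    · rw [dif_pos h]
      have S1 := S1po r a h
      have F1' := S1facts r a h
      have S2 := MP_isPushout l (fM r a h) hl
      have F2' := MP_facts l (fM r a h) hl
      have F1 := facts_of_isPushout hr po2
      have F2 := facts_of_isPushout hl po1
      simp only [AC.Sat]
      constructor
      · rintro ⟨q', hq', hbq', hsat⟩
        -- build `d : Del ⟶ D` with `d ≫ k = pY ≫ q'`
        have keyV : ∀ x : (Del r a h).V,
            ∃ z : D.V, onV k z = onV q' (onV (pYhom l (fM r a h)) x) := by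
          intro x
          rcases F2.surjV (onV q' (onV (pYhom l (fM r a h)) x)) with ⟨y, hy⟩ | ⟨z, hz⟩
          · have hy' : onV q' (onV (pXhom l (fM r a h) hl) y)
                = onV q' (onV (pYhom l (fM r a h)) x) := (elemV hbq' y).trans hy
            obtain ⟨i, hli, hfi⟩ := F2'.mixedV y x (hq'.1 hy')
            refine ⟨onV f i, ?_⟩
            calc onV k (onV f i) = onV m (onV l i) := (elemV po1.w i).symm
              _ = onV m y := by rw [hli]
              _ = _ := hy
          · exact ⟨z, hz⟩
        have keyE : ∀ x : (Del r a h).E,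
            ∃ z : D.E, onE k z = onE q' (onE (pYhom l (fM r a h)) x) := by
          intro x
          rcases F2.surjE (onE q' (onE (pYhom l (fM r a h)) x)) with ⟨y, hy⟩ | ⟨z, hz⟩
          · have hy' : onE q' (onE (pXhom l (fM r a h) hl) y)
                = onE q' (onE (pYhom l (fM r a h)) x) := (elemE hbq' y).trans hy
            obtain ⟨i, hli, hfi⟩ := F2'.mixedE y x (hq'.2 hy')
            refine ⟨onE f i, ?_⟩
            calc onE k (onE f i) = onE m (onE l i) := (elemE po1.w i).symm
              _ = onE m y := by rw [hli]
              _ = _ := hy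
          · exact ⟨z, hz⟩
        choose dV hdV using keyV
        choose dE hdE using keyE
        have dcs : ∀ e, D.s (dE e) = dV ((Del r a h).s e) := by
          intro e
          apply F2.injq.1
          calc onV k (D.s (dE e)) = G.s (onE k (dE e)) := (MGraphHom.comm_s k (dE e)).symm
            _ = G.s (onE q' (onE (pYhom l (fM r a h)) e)) := by rw [hdE e]
            _ = onV q' ((MP l (fM r a h)).s (onE (pYhom l (fM r a h)) e)) :=
                MGraphHom.comm_s q' _
            _ = onV q' (onV (pYhom l (fM r a h)) ((Del r a h).s e)) := rfl
            _ = onV k (dV ((Del r a h).s e)) := (hdV _).symm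
        have dct : ∀ e, D.t (dE e) = dV ((Del r a h).t e) := by
          intro e
          apply F2.injq.1
          calc onV k (D.t (dE e)) = G.t (onE k (dE e)) := (MGraphHom.comm_t k (dE e)).symm
            _ = G.t (onE q' (onE (pYhom l (fM r a h)) e)) := by rw [hdE e]
            _ = onV q' ((MP l (fM r a h)).t (onE (pYhom l (fM r a h)) e)) :=
                MGraphHom.comm_t q' _
            _ = onV q' (onV (pYhom l (fM r a h)) ((Del r a h).t e)) := rfl
            _ = onV k (dV ((Del r a h).t e)) := (hdV _).symm
        set d : Del r a h ⟶ D := ⟨dV, dE, dcs, dct⟩ with hd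
        have hdk : d ≫ k = pYhom l (fM r a h) ≫ q' :=
          MGraph.hom_ext' (funext hdV) (funext hdE)
        have hfd : fM r a h ≫ d = f := by
          apply MGraph.hom_ext'
          · funext i
            apply F2.injq.1
            calc onV k (dV (onV (fM r a h) i))
                = onV q' (onV (pYhom l (fM r a h)) (onV (fM r a h) i)) := hdV _
              _ = onV q' (onV (pXhom l (fM r a h) hl) (onV l i)) :=
                  congrArg (onV q') (elemV (MP_comm l (fM r a h) hl) i).symm
              _ = onV m (onV l i) := elemV hbq' (onV l i)
              _ = onV k (onV f i) := elemV po1.w i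
          · funext i
            apply F2.injq.2
            calc onE k (dE (onE (fM r a h) i))
                = onE q' (onE (pYhom l (fM r a h)) (onE (fM r a h) i)) := hdE _
              _ = onE q' (onE (pXhom l (fM r a h) hl) (onE l i)) :=
                  congrArg (onE q') (elemE (MP_comm l (fM r a h) hl) i).symm
              _ = onE m (onE l i) := elemE hbq' (onE l i)
              _ = onE k (onE f i) := elemE po1.w i
        have hw1 : r ≫ cm = fM r a h ≫ (d ≫ cc) := by
          rw [← Category.assoc, hfd]
          exact po2.w
        set q : Qc ⟶ H := S1.desc cm (d ≫ cc) hw1 with hq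
        have haq : a ≫ q = cm := S1.inl_desc cm (d ≫ cc) hw1
        have hkq : kM r a h ≫ q = d ≫ cc := S1.inr_desc cm (d ≫ cc) hw1
        have sbig1 : IsPushout l (fM r a h ≫ d) (pXhom l (fM r a h) hl ≫ q') k := by
          rw [hfd, hbq']
          exact po1
        have NPo1 : IsPushout (pYhom l (fM r a h)) d q' k :=
          IsPushout.of_top sbig1 hdk.symm S2
        have sbig2 : IsPushout r (fM r a h ≫ d) (a ≫ q) cc := by
          rw [hfd, haq]
          exact po2
        have NPo2 : IsPushout (kM r a h) d q cc :=
          IsPushout.of_top sbig2 hkq S1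
        have dinj : InjHom d := by
          constructor
          · intro x x' hxx
            have h1 : onV q' (onV (pYhom l (fM r a h)) x)
                = onV q' (onV (pYhom l (fM r a h)) x') := by
              rw [← hdV, ← hdV]
              exact congrArg _ hxx
            exact Sum.inl_injective (hq'.1 h1)
          · intro x x' hxx
            have h1 : onE q' (onE (pYhom l (fM r a h)) x)
                = onE q' (onE (pYhom l (fM r a h)) x') := by
              rw [← hdE, ← hdE]
              exact congrArg _ hxx
            exact Sum.inl_injective (hq'.2 h1)
        have qinj : InjHom q := (facts_of_isPushout dinj NPo2.flip).injq
        refine ⟨q, qinj, haq, ?_⟩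
        exact (ih (pYhom l (fM r a h)) (kM r a h) (pYhom_inj l (fM r a h)) (kM_inj r a h)
          q' d k cc q NPo1 NPo2).mp hsat
      · rintro ⟨q, qinj, haq, hsatq⟩
        -- build `d : Del ⟶ D` with `d ≫ cc = kM ≫ q`
        have keyV : ∀ x : (Del r a h).V,
            ∃ z : D.V, onV cc z = onV q (onV (kM r a h) x) := by
          intro x
          rcases F1.surjV (onV q (onV (kM r a h) x)) with ⟨y, hy⟩ | ⟨z, hz⟩
          · have hy' : onV q (onV a y) = onV q (onV (kM r a h) x) := (elemV haq y).trans hy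
            obtain ⟨i, hri, hfi⟩ := F1'.mixedV y x (qinj.1 hy')
            refine ⟨onV f i, ?_⟩
            calc onV cc (onV f i) = onV cm (onV r i) := (elemV po2.w i).symm
              _ = onV cm y := by rw [hri]
              _ = _ := hy
          · exact ⟨z, hz⟩
        have keyE : ∀ x : (Del r a h).E,
            ∃ z : D.E, onE cc z = onE q (onE (kM r a h) x) := by
          intro x
          rcases F1.surjE (onE q (onE (kM r a h) x)) with ⟨y, hy⟩ | ⟨z, hz⟩
          · have hy' : onE q (onE a y) = onE q (onE (kM r a h) x) := (elemE haq y).trans hy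
            obtain ⟨i, hri, hfi⟩ := F1'.mixedE y x (qinj.2 hy')
            refine ⟨onE f i, ?_⟩
            calc onE cc (onE f i) = onE cm (onE r i) := (elemE po2.w i).symm
              _ = onE cm y := by rw [hri]
              _ = _ := hy
          · exact ⟨z, hz⟩
        choose dV hdV using keyV
        choose dE hdE using keyE
        have dcs : ∀ e, D.s (dE e) = dV ((Del r a h).s e) := by
          intro e
          apply F1.injq.1
          calc onV cc (D.s (dE e)) = H.s (onE cc (dE e)) := (MGraphHom.comm_s cc (dE e)).symm
            _ = H.s (onE q (onE (kM r a h) e)) := by rw [hdE e]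
            _ = onV q (Qc.s (onE (kM r a h) e)) := MGraphHom.comm_s q _
            _ = onV q (onV (kM r a h) ((Del r a h).s e)) := rfl
            _ = onV cc (dV ((Del r a h).s e)) := (hdV _).symm
        have dct : ∀ e, D.t (dE e) = dV ((Del r a h).t e) := by
          intro e
          apply F1.injq.1
          calc onV cc (D.t (dE e)) = H.t (onE cc (dE e)) := (MGraphHom.comm_t cc (dE e)).symm
            _ = H.t (onE q (onE (kM r a h) e)) := by rw [hdE e]
            _ = onV q (Qc.t (onE (kM r a h) e)) := MGraphHom.comm_t q _
            _ = onV q (onV (kM r a h) ((Del r a h).t e)) := rfl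
            _ = onV cc (dV ((Del r a h).t e)) := (hdV _).symm
        set d : Del r a h ⟶ D := ⟨dV, dE, dcs, dct⟩ with hd
        have hdc : d ≫ cc = kM r a h ≫ q :=
          MGraph.hom_ext' (funext hdV) (funext hdE)
        have hfd : fM r a h ≫ d = f := by
          apply MGraph.hom_ext'
          · funext i
            apply F1.injq.1
            calc onV cc (dV (onV (fM r a h) i))
                = onV q (onV (kM r a h) (onV (fM r a h) i)) := hdV _
              _ = onV q (onV a (onV r i)) :=
                  congrArg (onV q) (elemV (S1comm r a h) i).symm
              _ = onV cm (onV r i) := elemV haq (onV r i)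
              _ = onV cc (onV f i) := elemV po2.w i
          · funext i
            apply F1.injq.2
            calc onE cc (dE (onE (fM r a h) i))
                = onE q (onE (kM r a h) (onE (fM r a h) i)) := hdE _
              _ = onE q (onE a (onE r i)) :=
                  congrArg (onE q) (elemE (S1comm r a h) i).symm
              _ = onE cm (onE r i) := elemE haq (onE r i)
              _ = onE cc (onE f i) := elemE po2.w i
        have hw2 : l ≫ m = fM r a h ≫ (d ≫ k) := by
          rw [← Category.assoc, hfd]
          exact po1.w
        set q' : MP l (fM r a h) ⟶ G := S2.desc m (d ≫ k) hw2 with hq'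
        have hbq' : pXhom l (fM r a h) hl ≫ q' = m := S2.inl_desc m (d ≫ k) hw2
        have hyq' : pYhom l (fM r a h) ≫ q' = d ≫ k := S2.inr_desc m (d ≫ k) hw2
        have sbig1 : IsPushout l (fM r a h ≫ d) (pXhom l (fM r a h) hl ≫ q') k := by
          rw [hfd, hbq']
          exact po1
        have NPo1 : IsPushout (pYhom l (fM r a h)) d q' k :=
          IsPushout.of_top sbig1 hyq' S2
        have sbig2 : IsPushout r (fM r a h ≫ d) (a ≫ q) cc := by
          rw [hfd, haq]
          exact po2
        have NPo2 : IsPushout (kM r a h) d q cc :=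
          IsPushout.of_top sbig2 hdc.symm S1
        have dinj : InjHom d := by
          constructor
          · intro x x' hxx
            have h1 : onV q (onV (kM r a h) x) = onV q (onV (kM r a h) x') := by
              rw [← hdV, ← hdV]
              exact congrArg _ hxx
            exact Subtype.ext (qinj.1 h1)
          · intro x x' hxx
            have h1 : onE q (onE (kM r a h) x) = onE q (onE (kM r a h) x') := by
              rw [← hdE, ← hdE]
              exact congrArg _ hxx
            exact Subtype.ext (qinj.2 h1)
        have q'inj : InjHom q' := (facts_of_isPushout dinj NPo1.flip).injq
        refine ⟨q', q'inj, hbq', ?_⟩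
        exact (ih (pYhom l (fM r a h)) (kM r a h) (pYhom_inj l (fM r a h)) (kM_inj r a h)
          q' d k cc q NPo1 NPo2).mpr hsatq
    · rw [dif_neg h]
      simp only [AC.Sat]
      constructor
      · intro h'
        exact (h' trivial).elim
      · rintro ⟨q, qinj, haq, -⟩
        intro _
        exact h (gc_of_extension po2 hr qinj haq)

end ShiftAux

/-- Shifting of application conditions over rules (from right to left) in the category
of directed multigraphs: for every plain rule `p : L ⟵l I ⟶r R` and every AC `acR`
over `R`, there is an AC over `L` that is satisfied by the match `m` of any
AC-disregarding direct transformation `G ⇒_(p,m,m*) H` iff the comatch `m*` satisfies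
`acR`. -/
theorem left_shift_of_ACs_over_rules
    (p : PlainRule MGraph) (acR : AC p.R) :
    ∃ acL : AC p.L, ∀ {G H : MGraph} (t : Trafo p G H),
      AC.Sat t.m acL ↔ AC.Sat t.cm acR := by
  have hl := ShiftAux.injHom_of_mono p.l p.mono_l
  have hr := ShiftAux.injHom_of_mono p.r p.mono_r
  refine ⟨ShiftAux.Left acR p.l p.r hl, ?_⟩
  intro G H t
  exact ShiftAux.left_correct acR p.l p.r hl hr t.m t.f t.k t.c t.cm t.po1 t.po2
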